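/- If 0 → A → B → C → 0 is a short exact sequence of finitely presented modules over a commutative ring R, then Fitt_R(A) · Fitt_R(C) ⊆ Fitt_R(B). -/

import Mathlib

/-- The zeroth Fitting ideal of a module `M` over a commutative ring `R`: the ideal
generated by determinants of square matrices of relations among a finite generating
family of `M`. -/
def fittingIdeal (R : Type*) [CommRing R] (M : Type*) [AddCommGroup M] [Module R M] :
    Ideal R :=
  Ideal.span { r : R | ∃ (n : ℕ) (v : Fin n → M) (A : Matrix (Fin n) (Fin n) R),
    Submodule.span R (Set.range v) = ⊤ ∧ (∀ j, ∑ i, A i j • v i = 0) ∧ r = A.det }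

/-- If `0 → A → B → C → 0` is a short exact sequence of finitely presented modules over a
commutative ring `R`, then `Fitt_R(A) · Fitt_R(C) ⊆ Fitt_R(B)`. -/
theorem fittingIdeal_mul_le_of_shortExact
    (R : Type*) [CommRing R] (A B C : Type*)
    [AddCommGroup A] [Module R A] [AddCommGroup B] [Module R B] [AddCommGroup C] [Module R C]
    [Module.FinitePresentation R A] [Module.FinitePresentation R B]
    [Module.FinitePresentation R C]
    (f : A →ₗ[R] B) (g : B →ₗ[R] C)
    (hf : Function.Injective f) (hg : Function.Surjective g)
    (hfg : LinearMap.range f = LinearMap.ker g) :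
    fittingIdeal R A * fittingIdeal R C ≤ fittingIdeal R B := by
  rw [fittingIdeal, fittingIdeal, fittingIdeal, Ideal.span_mul_span', Ideal.span_le]
  rintro x ⟨a, ⟨n, v, M, hv, hM, rfl⟩, c, ⟨m, w, N, hw, hN, rfl⟩, rfl⟩
  apply Ideal.subset_span
  -- lift the generators of C to B
  choose u hu using fun j => hg (w j)
  -- each relation column of N gives an element of ker g = range f
  have hker : ∀ l : Fin m, (∑ j, N j l • u j) ∈ LinearMap.range f := by
    intro l
    rw [hfg, LinearMap.mem_ker, map_sum]
    simp only [map_smul, hu]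
    exact hN l
  choose aL haL using hker
  -- express each aL in terms of the generators v of A
  have hq : ∀ l : Fin m, ∃ q : Fin n → R, ∑ i, q i • v i = aL l := by
    intro l
    rw [← Submodule.mem_span_range_iff_exists_fun]
    rw [hv]; trivial
  choose q hqv using hq
  -- the combined generating family of B
  set v' : Fin n ⊕ Fin m → B := Sum.elim (f ∘ v) u with hv'
  set Mb : Matrix (Fin n ⊕ Fin m) (Fin n ⊕ Fin m) R :=
    Matrix.fromBlocks M (Matrix.of fun i l => -(q l i)) 0 N with hMb
  set e := finSumFinEquiv (m := n) (n := m)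
  refine ⟨n + m, v' ∘ e.symm, (Matrix.reindex e e) Mb, ?_, ?_, ?_⟩
  · -- spanning
    rw [Set.range_comp, Equiv.range_eq_univ, Set.image_univ]
    rw [eq_top_iff]
    rintro b -
    have hgb : g b ∈ Submodule.span R (Set.range w) := by rw [hw]; trivial
    rw [Submodule.mem_span_range_iff_exists_fun] at hgb
    obtain ⟨d, hd⟩ := hgb
    have hbk : (b - ∑ j, d j • u j) ∈ LinearMap.range f := by
      rw [hfg, LinearMap.mem_ker, map_sub, map_sum]
      simp only [map_smul, hu]
      rw [hd, sub_self]
    obtain ⟨a', ha'⟩ := hbk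
    have ha'' : a' ∈ Submodule.span R (Set.range v) := by rw [hv]; trivial
    rw [Submodule.mem_span_range_iff_exists_fun] at ha''
    obtain ⟨d', hd'⟩ := ha''
    have hb : b = (∑ i, d' i • f (v i)) + ∑ j, d j • u j := by
      have := congrArg (· + ∑ j, d j • u j) ha'
      simp only [sub_add_cancel] at this
      rw [← this, ← hd', map_sum]
      simp only [map_smul]
    rw [hb]
    refine add_mem (Submodule.sum_mem _ fun i _ => ?_) (Submodule.sum_mem _ fun j _ => ?_)
    · exact Submodule.smul_mem _ _ (Submodule.subset_span ⟨Sum.inl i, rfl⟩)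
    · exact Submodule.smul_mem _ _ (Submodule.subset_span ⟨Sum.inr j, rfl⟩)
  · -- relations
    intro j
    have key : ∀ s : Fin n ⊕ Fin m, ∑ t : Fin n ⊕ Fin m, Mb t s • v' t = 0 := by
      rintro (j₀ | l)
      · rw [Fintype.sum_sum_type]
        simp only [hMb, hv', Matrix.fromBlocks_apply₁₁, Matrix.fromBlocks_apply₂₁,
          Sum.elim_inl, Sum.elim_inr, Function.comp_apply, Matrix.zero_apply, zero_smul,
          Finset.sum_const_zero, add_zero]
        simpa [map_sum] using congrArg f (hM j₀)
      · rw [Fintype.sum_sum_type]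
        simp only [hMb, hv', Matrix.fromBlocks_apply₁₂, Matrix.fromBlocks_apply₂₂,
          Sum.elim_inl, Sum.elim_inr, Function.comp_apply, Matrix.of_apply]
        have h1 : ∑ x : Fin n, (-q l x) • f (v x) = -(∑ j, N j l • u j) := by
          rw [← haL l, ← hqv l, map_sum]
          simp [neg_smul]
        rw [h1, neg_add_cancel]
    calc ∑ i, (Matrix.reindex e e Mb) i j • (v' ∘ e.symm) i
        = ∑ i, Mb (e.symm i) (e.symm j) • v' (e.symm i) := by
          simp [Matrix.reindex_apply]
      _ = ∑ t, Mb t (e.symm j) • v' t := Equiv.sum_comp e.symm (fun t => Mb t (e.symm j) • v' t)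
      _ = 0 := key _
  · rw [Matrix.det_reindex_self, hMb, Matrix.det_fromBlocks_zero₂₁]
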